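/- Suppose p = p_1 ⊔ p_2 and q = q_1 ⊔ q_2 are partitions of n with p_i dominating q_i for i = 1,2, and suppose that for all t, 0 ≤ (sum of first t parts of p) − (sum of first t parts of q) ≤ 1. Then for each i ∈ {1,2} and each t, 0 ≤ (sum of first t parts of p_i) − (sum of first t parts of q_i) ≤ 1. -/

import Mathlib

/-- Sum of the `t` largest elements of a multiset of naturals. -/
def sumLargest (M : Multiset ℕ) (t : ℕ) : ℕ := (((M.sort (· ≤ ·)).reverse).take t).sum

/-- Dominance order: for every `t`, the sum of the `t` largest parts of `M` is at least
that of `N`. -/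
def Dom (M N : Multiset ℕ) : Prop := ∀ t, sumLargest N t ≤ sumLargest M t

lemma sumLargest_zero_left (t : ℕ) : sumLargest 0 t = 0 := by
  simp [sumLargest]

lemma sumLargest_zero (M : Multiset ℕ) : sumLargest M 0 = 0 := by
  simp [sumLargest]

lemma exists_max (M : Multiset ℕ) (h : M ≠ 0) : ∃ a ∈ M, ∀ x ∈ M, x ≤ a := by
  induction M using Multiset.induction_on with
  | empty => simp at h
  | cons b M ih =>
    rcases eq_or_ne M 0 with rfl | hM
    · exact ⟨b, by simp, by simp⟩
    · obtain ⟨a, ha, hmax⟩ := ih hM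
      refine ⟨max b a, ?_, ?_⟩
      · rcases le_total b a with h1 | h1
        · simp [max_eq_right h1, Multiset.mem_cons, ha]
        · simp [max_eq_left h1]
      · intro x hx
        rcases Multiset.mem_cons.mp hx with rfl | hx
        · exact le_max_left _ _
        · exact le_trans (hmax x hx) (le_max_right _ _)

lemma sort_max (M : Multiset ℕ) (a : ℕ) (ha : a ∈ M) (hmax : ∀ x ∈ M, x ≤ a) :
    M.sort (· ≤ ·) = (M.erase a).sort (· ≤ ·) ++ [a] := by
  apply (fun (hp : List.Perm _ _) h1 h2 => List.Perm.eq_of_pairwise' (r := fun x y : ℕ => x ≤ y) h1 h2 hp)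
  · apply Multiset.coe_eq_coe.mp
    rw [Multiset.sort_eq, ← Multiset.coe_add, Multiset.sort_eq]
    symm
    rw [add_comm, show ((↑[a] : Multiset ℕ)) = ({a} : Multiset ℕ) from rfl,
      Multiset.singleton_add, Multiset.cons_erase ha]
  · exact Multiset.pairwise_sort _ _
  · refine List.pairwise_append.mpr ⟨Multiset.pairwise_sort _ _, List.pairwise_singleton _ a, ?_⟩
    intro x hx b hb
    simp only [List.mem_singleton] at hb
    have hx' : x ∈ M.erase a := by
      rw [← Multiset.mem_coe, Multiset.sort_eq] at hx; exact hx
    rw [hb]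
    exact hmax x (Multiset.mem_of_mem_erase hx')

lemma sumLargest_succ (M : Multiset ℕ) (a t : ℕ) (ha : a ∈ M) (hmax : ∀ x ∈ M, x ≤ a) :
    sumLargest M (t+1) = a + sumLargest (M.erase a) t := by
  unfold sumLargest
  rw [sort_max M a ha hmax]
  simp

lemma erase_max_le {N M : Multiset ℕ} (h : N ≤ M) {n m : ℕ}
    (hn : n ∈ N) (hnmax : ∀ x ∈ N, x ≤ n) (hm : m ∈ M) (hmmax : ∀ x ∈ M, x ≤ m) :
    N.erase n ≤ M.erase m := by
  rw [Multiset.le_iff_count]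
  intro x
  rcases eq_or_ne x n with rfl | hxn
  · rcases eq_or_ne x m with rfl | hxm
    · rw [Multiset.count_erase_self, Multiset.count_erase_self]
      exact Nat.sub_le_sub_right (Multiset.le_iff_count.mp h x) 1
    · rw [Multiset.count_erase_self, Multiset.count_erase_of_ne hxm]
      exact le_trans (Nat.sub_le _ _) (Multiset.le_iff_count.mp h x)
  · rcases eq_or_ne x m with rfl | hxm
    · have hnx : n < x := lt_of_le_of_ne (hmmax n (Multiset.mem_of_le h hn)) (Ne.symm hxn)
      have hxN : x ∉ N := fun hmem => absurd (hnmax x hmem) (not_le.mpr hnx)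
      rw [Multiset.count_erase_of_ne hxn, Multiset.count_eq_zero.mpr hxN]
      exact Nat.zero_le _
    · rw [Multiset.count_erase_of_ne hxn, Multiset.count_erase_of_ne hxm]
      exact Multiset.le_iff_count.mp h x

lemma sumLargest_mono_left : ∀ (t : ℕ) {N M : Multiset ℕ}, N ≤ M →
    sumLargest N t ≤ sumLargest M t := by
  intro t
  induction t with
  | zero => intro N M _; simp [sumLargest_zero]
  | succ t ih =>
    intro N M h
    rcases eq_or_ne N 0 with rfl | hN
    · simp [sumLargest_zero_left]
    have hM : M ≠ 0 := by
      rintro rfl; exact hN (Multiset.le_zero.mp h)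
    obtain ⟨n, hn, hnmax⟩ := exists_max N hN
    obtain ⟨m, hm, hmmax⟩ := exists_max M hM
    rw [sumLargest_succ N n t hn hnmax, sumLargest_succ M m t hm hmmax]
    exact Nat.add_le_add (hmmax n (Multiset.mem_of_le h hn))
      (ih (erase_max_le h hn hnmax hm hmmax))

lemma superadd_aux : ∀ s (A B : Multiset ℕ) (a b : ℕ), a + b = s →
    sumLargest A a + sumLargest B b ≤ sumLargest (A + B) (a + b) := by
  intro s
  induction s using Nat.strong_induction_on with
  | _ s ih =>
    intro A B a b hs
    rcases Nat.eq_zero_or_pos a with rfl | ha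
    · simpa [sumLargest_zero] using sumLargest_mono_left b (Multiset.le_add_left B A)
    rcases Nat.eq_zero_or_pos b with rfl | hb
    · simpa [sumLargest_zero] using sumLargest_mono_left a (Multiset.le_add_right A B)
    rcases eq_or_ne (A + B) 0 with h0 | hne
    · have hA : A = 0 := Multiset.le_zero.mp (h0 ▸ Multiset.le_add_right A B)
      have hB : B = 0 := Multiset.le_zero.mp (h0 ▸ Multiset.le_add_left B A)
      simp [hA, hB, sumLargest_zero_left]
    obtain ⟨m, hm, hmax⟩ := exists_max _ hne
    obtain ⟨a', rfl⟩ : ∃ a', a = a' + 1 := ⟨a - 1, by omega⟩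
    obtain ⟨b', rfl⟩ : ∃ b', b = b' + 1 := ⟨b - 1, by omega⟩
    rcases Multiset.mem_add.mp hm with hmA | hmB
    · have hmaxA : ∀ x ∈ A, x ≤ m := fun x hx => hmax x (Multiset.mem_add.mpr (Or.inl hx))
      rw [sumLargest_succ A m a' hmA hmaxA,
        show a' + 1 + (b' + 1) = (a' + (b' + 1)) + 1 by ring,
        sumLargest_succ (A + B) m _ hm hmax, Multiset.erase_add_left_pos B hmA, add_assoc]
      exact Nat.add_le_add_left (ih (a' + (b' + 1)) (by omega) _ B a' (b' + 1) rfl) m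
    · have hmaxB : ∀ x ∈ B, x ≤ m := fun x hx => hmax x (Multiset.mem_add.mpr (Or.inr hx))
      rw [sumLargest_succ B m b' hmB hmaxB,
        show a' + 1 + (b' + 1) = ((a' + 1) + b') + 1 by ring,
        sumLargest_succ (A + B) m _ hm hmax, Multiset.erase_add_right_pos A hmB]
      calc sumLargest A (a' + 1) + (m + sumLargest (B.erase m) b')
          = m + (sumLargest A (a' + 1) + sumLargest (B.erase m) b') := by ring
        _ ≤ m + sumLargest (A + B.erase m) (a' + 1 + b') :=
            Nat.add_le_add_left (ih (a' + 1 + b') (by omega) _ _ _ _ rfl) m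

lemma superadd (A B : Multiset ℕ) (a b : ℕ) :
    sumLargest A a + sumLargest B b ≤ sumLargest (A + B) (a + b) :=
  superadd_aux (a + b) A B a b rfl

lemma split_aux : ∀ n (A B : Multiset ℕ), (A + B).card ≤ n → ∀ t,
    ∃ u, sumLargest (A + B) (t + u) ≤ sumLargest A t + sumLargest B u := by
  intro n
  induction n with
  | zero =>
    intro A B hcard t
    have h0 : A + B = 0 := by
      rw [← Multiset.card_eq_zero]; omega
    exact ⟨0, by simp [h0, sumLargest_zero_left]⟩
  | succ n ih =>
    intro A B hcard t
    rcases eq_or_ne (A + B) 0 with h0 | hne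
    · exact ⟨0, by simp [h0, sumLargest_zero_left]⟩
    rcases Nat.eq_zero_or_pos t with rfl | ht
    · exact ⟨0, by simp [sumLargest_zero]⟩
    obtain ⟨t', rfl⟩ : ∃ t', t = t' + 1 := ⟨t - 1, by omega⟩
    obtain ⟨m, hm, hmax⟩ := exists_max _ hne
    have hmne : m ∈ A + B := hm
    have hcard' : (A + B).card ≥ 1 := by
      rcases Multiset.card_pos.mpr hne with h; exact h
    rcases Multiset.mem_add.mp hm with hmA | hmB
    · have hmaxA : ∀ x ∈ A, x ≤ m := fun x hx => hmax x (Multiset.mem_add.mpr (Or.inl hx))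
      obtain ⟨u, hu⟩ := ih (A.erase m) B (by
        rw [← Multiset.erase_add_left_pos B hmA, Multiset.card_erase_of_mem hm,
          Nat.pred_eq_sub_one]; omega) t'
      refine ⟨u, ?_⟩
      rw [show t' + 1 + u = (t' + u) + 1 by ring,
        sumLargest_succ (A + B) m _ hm hmax, Multiset.erase_add_left_pos B hmA,
        sumLargest_succ A m t' hmA hmaxA, add_assoc]
      exact Nat.add_le_add_left hu m
    · have hmaxB : ∀ x ∈ B, x ≤ m := fun x hx => hmax x (Multiset.mem_add.mpr (Or.inr hx))
      obtain ⟨u, hu⟩ := ih A (B.erase m) (by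
        rw [← Multiset.erase_add_right_pos A hmB, Multiset.card_erase_of_mem hm,
          Nat.pred_eq_sub_one]; omega) (t' + 1)
      refine ⟨u + 1, ?_⟩
      rw [show t' + 1 + (u + 1) = (t' + 1 + u) + 1 by ring,
        sumLargest_succ (A + B) m _ hm hmax, Multiset.erase_add_right_pos A hmB,
        sumLargest_succ B m u hmB hmaxB]
      omega

lemma split (A B : Multiset ℕ) (t : ℕ) :
    ∃ u, sumLargest (A + B) (t + u) ≤ sumLargest A t + sumLargest B u :=
  split_aux (A + B).card A B le_rfl t

/-- if `p = p1 ⊔ p2` and `q = q1 ⊔ q2` are partitions of `n` with `pi ≥ qi`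
for `i = 1, 2`, and all partial-sum differences of `p` over `q` lie in `{0, 1}`, then for
each `i` all partial-sum differences of `pi` over `qi` lie in `{0, 1}`. -/
theorem stmt_3 (n : ℕ) (p1 p2 q1 q2 : Multiset ℕ)
    (hp1' : 0 ∉ p1) (hq1' : 0 ∉ q1) (hp2' : 0 ∉ p2) (hq2' : 0 ∉ q2)
    (hp : (p1 + p2).sum = n) (hq : (q1 + q2).sum = n)
    (h1 : Dom p1 q1) (h2 : Dom p2 q2)
    (hdom : Dom (p1 + p2) (q1 + q2))
    (hdiff : ∀ t, sumLargest (p1 + p2) t ≤ sumLargest (q1 + q2) t + 1) :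
    (∀ t, sumLargest q1 t ≤ sumLargest p1 t ∧ sumLargest p1 t ≤ sumLargest q1 t + 1) ∧
    (∀ t, sumLargest q2 t ≤ sumLargest p2 t ∧ sumLargest p2 t ≤ sumLargest q2 t + 1) := by
  constructor
  · intro t
    refine ⟨h1 t, ?_⟩
    obtain ⟨u, hu⟩ := split q1 q2 t
    have hsup := superadd p1 p2 t u
    have hd := hdiff (t + u)
    have h2u := h2 u
    omega
  · intro t
    refine ⟨h2 t, ?_⟩
    obtain ⟨u, hu⟩ := split q2 q1 t
    rw [add_comm q2 q1] at hu
    have hsup := superadd p2 p1 t u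
    rw [add_comm p2 p1] at hsup
    have hd := hdiff (t + u)
    have h1u := h1 u
    omega
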